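/- Let G be a tree on vertex set [n], let s, ξ > 0 and θ ≥ 1, and let f = (f₁,…,f_n) satisfy Σ f_i = s and 0 ≤ f_i ≤ ξ for all i. Then Σ_{i<j, i∼j} f_i^θ f_j^θ ≤ s^{2θ}/4 if s < 2ξ, and Σ_{i<j, i∼j} f_i^θ f_j^θ ≤ ξ^θ (s − ξ)^θ if s ≥ 2ξ. -/

import Mathlib

open SimpleGraph

section TreeAux

variable {n : ℕ} {G : SimpleGraph (Fin n)}

noncomputable def pathTo (hG : G.IsTree) (r v : Fin n) : G.Path v r :=
  (Classical.choice (hG.isConnected.preconnected v r : Nonempty (G.Walk v r))).toPath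

noncomputable def par (hG : G.IsTree) (r v : Fin n) : Fin n :=
  ((pathTo hG r v : G.Walk v r)).getVert 1

lemma par_self (hG : G.IsTree) (r : Fin n) : par hG r r = r := by
  have h : pathTo hG r r = SimpleGraph.Path.nil := SimpleGraph.Path.loop_eq _
  simp only [par, h]
  rfl

lemma par_adj (hG : G.IsTree) (r : Fin n) {i j : Fin n} (hij : G.Adj i j) :
    par hG r i = j ∨ par hG r j = i := by
  classical
  by_cases hj : j ∈ ((pathTo hG r i : G.Walk i r)).support
  · left
    have htake : (((pathTo hG r i : G.Walk i r)).takeUntil j hj).IsPath :=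
      (pathTo hG r i).2.takeUntil hj
    have hedge : (Walk.cons hij Walk.nil : G.Walk i j).IsPath := by
      simp [hij.ne]
    have h2 : (⟨_, htake⟩ : G.Path i j) = ⟨Walk.cons hij Walk.nil, hedge⟩ :=
      hG.IsAcyclic.path_unique _ _
    have h3 : ((pathTo hG r i : G.Walk i r)).takeUntil j hj = Walk.cons hij Walk.nil :=
      congrArg Subtype.val h2
    have h4 := Walk.take_spec ((pathTo hG r i : G.Walk i r)) hj
    rw [h3] at h4
    simp only [Walk.cons_append, Walk.nil_append] at h4
    have h5 := h4.symm
    show ((pathTo hG r i : G.Walk i r)).getVert 1 = j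
    rw [h5]
    rw [show (1:ℕ) = 0 + 1 from rfl, Walk.getVert_cons_succ, Walk.getVert_zero]
  · right
    have hW : (Walk.cons hij.symm (pathTo hG r i : G.Walk i r)).IsPath :=
      (pathTo hG r i).2.cons hj
    have h2 : pathTo hG r j = ⟨Walk.cons hij.symm (pathTo hG r i : G.Walk i r), hW⟩ :=
      hG.IsAcyclic.path_unique _ _
    show ((pathTo hG r j : G.Walk j r)).getVert 1 = i
    rw [h2]
    rw [show (1:ℕ) = 0 + 1 from rfl, Walk.getVert_cons_succ, Walk.getVert_zero]

/-- Key structural bound: in a tree, the sum over edges of `g i * g j` is at most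
`g r * (∑ g - g r)` where `g r` is maximal. -/
lemma tree_key (G : SimpleGraph (Fin n)) [DecidableRel G.Adj] (hG : G.IsTree)
    (g : Fin n → ℝ) (hg : ∀ i, 0 ≤ g i) (r : Fin n) (hr : ∀ i, g i ≤ g r) :
    (∑ i : Fin n, ∑ j : Fin n, if i < j ∧ G.Adj i j then g i * g j else 0)
      ≤ g r * ((∑ i, g i) - g r) := by
  classical
  set E : Finset (Fin n × Fin n) :=
    (Finset.univ ×ˢ Finset.univ).filter (fun p => p.1 < p.2 ∧ G.Adj p.1 p.2) with hE
  have hsum : (∑ i : Fin n, ∑ j : Fin n, if i < j ∧ G.Adj i j then g i * g j else 0)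
      = ∑ p ∈ E, g p.1 * g p.2 := by
    rw [hE, Finset.sum_filter, Finset.sum_product]
  set c : Fin n × Fin n → Fin n :=
    fun p => if par hG r p.1 = p.2 then p.1 else p.2 with hc
  have hstruct : ∀ p ∈ E, (p.1 = c p ∧ p.2 = par hG r (c p) ∧ c p < par hG r (c p)) ∨
      (p.1 = par hG r (c p) ∧ p.2 = c p ∧ par hG r (c p) < c p) := by
    intro p hp
    rw [hE, Finset.mem_filter] at hp
    obtain ⟨-, hlt, hadj⟩ := hp
    by_cases h1 : par hG r p.1 = p.2
    · left
      have hcp : c p = p.1 := by simp only [hc]; exact if_pos h1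
      exact ⟨hcp.symm, by rw [hcp, h1], by rw [hcp, h1]; exact hlt⟩
    · right
      have h2 : par hG r p.2 = p.1 := (par_adj hG r hadj).resolve_left h1
      have hcp : c p = p.2 := by simp only [hc]; exact if_neg h1
      exact ⟨by rw [hcp, h2], hcp.symm, by rw [hcp, h2]; exact hlt⟩
  have hne : ∀ p ∈ E, c p ≠ r := by
    intro p hp hcr
    rcases hstruct p hp with ⟨-, -, hlt⟩ | ⟨-, -, hlt⟩ <;>
      rw [hcr, par_self hG r] at hlt <;> exact lt_irrefl _ hlt
  have hinj : ∀ p ∈ E, ∀ q ∈ E, c p = c q → p = q := by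
    intro p hp q hq hpq
    rcases hstruct p hp with ⟨hp1, hp2, hp3⟩ | ⟨hp1, hp2, hp3⟩ <;>
      rcases hstruct q hq with ⟨hq1, hq2, hq3⟩ | ⟨hq1, hq2, hq3⟩
    · exact Prod.ext (by rw [hp1, hq1, hpq]) (by rw [hp2, hq2, hpq])
    · exfalso; rw [hpq] at hp3; exact lt_asymm hp3 hq3
    · exfalso; rw [hpq] at hp3; exact lt_asymm hq3 hp3
    · exact Prod.ext (by rw [hp1, hq1, hpq]) (by rw [hp2, hq2, hpq])
  rw [hsum]
  calc ∑ p ∈ E, g p.1 * g p.2 ≤ ∑ p ∈ E, g r * g (c p) := by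
        apply Finset.sum_le_sum
        intro p hp
        rcases hstruct p hp with ⟨hp1, hp2, -⟩ | ⟨hp1, hp2, -⟩
        · rw [hp1, hp2, mul_comm]
          exact mul_le_mul_of_nonneg_right (hr _) (hg _)
        · rw [hp1, hp2]
          exact mul_le_mul_of_nonneg_right (hr _) (hg _)
    _ = g r * ∑ p ∈ E, g (c p) := by rw [Finset.mul_sum]
    _ ≤ g r * ∑ v ∈ Finset.univ.erase r, g v := by
        apply mul_le_mul_of_nonneg_left _ (hg r)
        rw [← Finset.sum_image hinj]
        apply Finset.sum_le_sum_of_subset_of_nonneg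
        · intro v hv
          rw [Finset.mem_image] at hv
          obtain ⟨p, hp, rfl⟩ := hv
          exact Finset.mem_erase.2 ⟨hne p hp, Finset.mem_univ _⟩
        · intro v _ _
          exact hg v
    _ = g r * ((∑ v, g v) - g r) := by
        rw [Finset.sum_erase_eq_sub (Finset.mem_univ r)]

end TreeAux

private lemma rpow_superadd {x y p : ℝ} (hx : 0 ≤ x) (hy : 0 ≤ y) (hp : 1 ≤ p) :
    x ^ p + y ^ p ≤ (x + y) ^ p := by
  have hp0 : (0:ℝ) < p := lt_of_lt_of_le one_pos hp
  rcases eq_or_lt_of_le (add_nonneg hx hy) with h | h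
  · have hx0 : x = 0 := le_antisymm (by linarith) hx
    have hy0 : y = 0 := le_antisymm (by linarith) hy
    simp [hx0, hy0, Real.zero_rpow hp0.ne']
  · have key : ∀ z : ℝ, 0 ≤ z → z ≤ x + y → z ^ p ≤ z * (x + y) ^ (p - 1) := by
      intro z hz hzle
      rcases eq_or_lt_of_le hz with hz0 | hz0
      · simp [← hz0, Real.zero_rpow hp0.ne']
      · calc z ^ p = z ^ (1 + (p - 1)) := by ring_nf
          _ = z * z ^ (p - 1) := by rw [Real.rpow_add hz0, Real.rpow_one]
          _ ≤ z * (x + y) ^ (p - 1) :=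
              mul_le_mul_of_nonneg_left (Real.rpow_le_rpow hz hzle (by linarith)) hz0.le
    have h1 := key x hx (by linarith)
    have h2 := key y hy (by linarith)
    have h3 : (x + y) ^ p = (x + y) * (x + y) ^ (p - 1) := by
      calc (x + y) ^ p = (x + y) ^ (1 + (p - 1)) := by ring_nf
        _ = (x + y) * (x + y) ^ (p - 1) := by rw [Real.rpow_add h, Real.rpow_one]
    rw [h3]
    nlinarith [Real.rpow_nonneg (add_nonneg hx hy) (p - 1)]

private lemma sum_rpow_le {ι : Type*} (s : Finset ι) (f : ι → ℝ) (hf : ∀ i ∈ s, 0 ≤ f i)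
    {p : ℝ} (hp : 1 ≤ p) : ∑ i ∈ s, f i ^ p ≤ (∑ i ∈ s, f i) ^ p := by
  classical
  induction s using Finset.cons_induction with
  | empty => simp [Real.zero_rpow (by positivity : p ≠ 0)]
  | cons a s ha ih =>
    rw [Finset.sum_cons, Finset.sum_cons]
    have h1 : ∀ i ∈ s, 0 ≤ f i := fun i hi => hf i (Finset.mem_cons_of_mem hi)
    calc f a ^ p + ∑ i ∈ s, f i ^ p ≤ f a ^ p + (∑ i ∈ s, f i) ^ p := by
          linarith [ih h1]
      _ ≤ (f a + ∑ i ∈ s, f i) ^ p :=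
          rpow_superadd (hf a (Finset.mem_cons_self a s)) (Finset.sum_nonneg h1) hp

private lemma rpow_mul_self {x : ℝ} (hx : 0 < x) (p : ℝ) : x ^ (p - 1) * x = x ^ p := by
  calc x ^ (p - 1) * x = x ^ (p - 1) * x ^ (1:ℝ) := by rw [Real.rpow_one]
    _ = x ^ (p - 1 + 1) := (Real.rpow_add hx _ _).symm
    _ = x ^ p := by ring_nf

/-- Let `G` be a tree on `[n]`, `s, ξ > 0`, `θ ≥ 1`, and `f` with `∑ f i = s`,
`0 ≤ f i ≤ ξ`. Then `∑_{i<j, i∼j} (f i)^θ (f j)^θ ≤ s^{2θ}/4` if `s < 2ξ`, and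
`≤ ξ^θ (s−ξ)^θ` if `s ≥ 2ξ`. -/
theorem tree_sum_bound {n : ℕ} (G : SimpleGraph (Fin n)) [DecidableRel G.Adj]
    (hG : G.IsTree)
    (s ξ : ℝ) (hs : 0 < s) (hξ : 0 < ξ) (θ : ℝ) (hθ : 1 ≤ θ)
    (f : Fin n → ℝ) (hsum : ∑ i, f i = s)
    (hf : ∀ i, 0 ≤ f i ∧ f i ≤ ξ) :
    (s < 2 * ξ →
      (∑ i : Fin n, ∑ j : Fin n,
          if i < j ∧ G.Adj i j then f i ^ θ * f j ^ θ else 0) ≤ s ^ (2 * θ) / 4) ∧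
    (2 * ξ ≤ s →
      (∑ i : Fin n, ∑ j : Fin n,
          if i < j ∧ G.Adj i j then f i ^ θ * f j ^ θ else 0) ≤ ξ ^ θ * (s - ξ) ^ θ) := by
  classical
  have hne : Nonempty (Fin n) := hG.isConnected.nonempty
  obtain ⟨r, -, hrmax⟩ := Finset.exists_max_image (Finset.univ : Finset (Fin n)) f
    Finset.univ_nonempty
  have hr' : ∀ i, f i ≤ f r := fun i => hrmax i (Finset.mem_univ i)
  set g : Fin n → ℝ := fun i => f i ^ θ with hgdef
  have hθ0 : (0:ℝ) ≤ θ := by linarith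
  have hg : ∀ i, 0 ≤ g i := fun i => Real.rpow_nonneg (hf i).1 θ
  have hgr : ∀ i, g i ≤ g r := fun i => Real.rpow_le_rpow (hf i).1 (hr' i) hθ0
  have key : (∑ i : Fin n, ∑ j : Fin n,
      if i < j ∧ G.Adj i j then f i ^ θ * f j ^ θ else 0)
      ≤ g r * ((∑ i, g i) - g r) := tree_key G hG g hg r hgr
  set T : ℝ := ∑ i, g i with hT
  set M : ℝ := g r with hM
  have hM0 : 0 ≤ M := hg r
  have hMT : M ≤ T :=
    Finset.single_le_sum (fun i _ => hg i) (Finset.mem_univ r)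
  have hT0 : 0 ≤ T := le_trans hM0 hMT
  constructor
  · intro _
    have hTs : T ≤ s ^ θ := by
      rw [hT, ← hsum]
      exact sum_rpow_le _ _ (fun i _ => (hf i).1) hθ
    have hs2 : s ^ (2 * θ) = (s ^ θ) ^ (2:ℕ) := by
      rw [show (2:ℝ) * θ = θ * 2 by ring, Real.rpow_mul hs.le, Real.rpow_two, sq]
    rw [hs2]
    nlinarith [sq_nonneg (T - 2 * M), mul_self_le_mul_self hT0 hTs]
  · intro h2ξ
    have hξθ : (0:ℝ) ≤ ξ ^ (θ - 1) := Real.rpow_nonneg hξ.le _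
    have hTξ : T ≤ ξ ^ (θ - 1) * s := by
      rw [hT, ← hsum, Finset.mul_sum]
      apply Finset.sum_le_sum
      intro i _
      rcases eq_or_lt_of_le (hf i).1 with h0 | h0
      · simp [hgdef, ← h0, Real.zero_rpow (by positivity : θ ≠ 0)]
      · calc g i = f i ^ (θ - 1) * f i := by rw [hgdef]; exact (rpow_mul_self h0 θ).symm
          _ ≤ ξ ^ (θ - 1) * f i :=
            mul_le_mul_of_nonneg_right
              (Real.rpow_le_rpow (hf i).1 (hf i).2 (by linarith)) (hf i).1
    have hM2 : M ≤ ξ ^ θ := Real.rpow_le_rpow (hf r).1 (hf r).2 hθ0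
    have hC : 2 * ξ ^ θ ≤ ξ ^ (θ - 1) * s := by
      have h1 : ξ ^ (θ - 1) * ξ = ξ ^ θ := rpow_mul_self hξ θ
      nlinarith
    have step1 : M * (T - M) ≤ ξ ^ θ * (ξ ^ (θ - 1) * s - ξ ^ θ) := by
      nlinarith [mul_nonneg (sub_nonneg.2 hM2)
        (by linarith : (0:ℝ) ≤ ξ ^ (θ - 1) * s - ξ ^ θ - M)]
    have step2 : ξ ^ (θ - 1) * s - ξ ^ θ ≤ (s - ξ) ^ θ := by
      have hsξ : (0:ℝ) < s - ξ := by linarith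
      have h1 : ξ ^ (θ - 1) ≤ (s - ξ) ^ (θ - 1) :=
        Real.rpow_le_rpow hξ.le (by linarith) (by linarith)
      have h2 : (s - ξ) ^ (θ - 1) * (s - ξ) = (s - ξ) ^ θ := rpow_mul_self hsξ θ
      have h3 : ξ ^ (θ - 1) * ξ = ξ ^ θ := rpow_mul_self hξ θ
      nlinarith
    have hξθ2 : (0:ℝ) ≤ ξ ^ θ := Real.rpow_nonneg hξ.le _
    calc (∑ i : Fin n, ∑ j : Fin n,
        if i < j ∧ G.Adj i j then f i ^ θ * f j ^ θ else 0) ≤ M * (T - M) := key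
      _ ≤ ξ ^ θ * (ξ ^ (θ - 1) * s - ξ ^ θ) := step1
      _ ≤ ξ ^ θ * (s - ξ) ^ θ := mul_le_mul_of_nonneg_left step2 hξθ2
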